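/- arXiv:1103.0170 — 4 statements merged into one kernel-verified Lean document; each statement's English description precedes it below -/
import Mathlib

section
/- Let k be a field (of any characteristic), let n ≥ 1, let h_0, …, h_{n−1} ∈ Hk, and let L : Hk → Hk be the k-linear operator L(h) = ∂ⁿ(h) + Σ_{i=0}^{n−1} h_i·∂ⁱ(h). Then V = {h ∈ Hk : L(h) = 0} is an n-dimensional k-vector subspace of Hk. -/
open scoped BigOperators

set_option linter.unusedSectionVars false

/-- The ring of Hurwitz series over `R`: all sequences `ℕ → R`, with termwise addition and
the Hurwitz (binomial-convolution) product. -/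
def HS (R : Type*) : Type _ := ℕ → R

namespace HS

variable {R : Type*} [CommRing R]

instance : AddCommGroup (HS R) := Pi.addCommGroup

instance {S : Type*} [Semiring S] [Module S R] : Module S (HS R) :=
  Pi.module ℕ (fun _ => R) S

@[simp] theorem add_apply (a b : HS R) (n : ℕ) : (a + b) n = a n + b n := rfl
@[simp] theorem zero_apply (n : ℕ) : (0 : HS R) n = 0 := rfl
@[simp] theorem smul_apply {S : Type*} [Semiring S] [Module S R] (c : S) (a : HS R) (n : ℕ) :
    (c • a) n = c • a n := rfl

instance : Mul (HS R) :=
  ⟨fun a b n => ∑ j ∈ Finset.range (n + 1), (n.choose j : R) * a j * b (n - j)⟩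

theorem mul_apply (a b : HS R) (n : ℕ) :
    (a * b) n = ∑ j ∈ Finset.range (n + 1), (n.choose j : R) * a j * b (n - j) := rfl

instance : One (HS R) := ⟨fun n => if n = 0 then 1 else 0⟩

theorem one_apply (n : ℕ) : (1 : HS R) n = if n = 0 then 1 else 0 := rfl

private theorem hmul_comm (a b : HS R) : a * b = b * a := by
  funext n
  rw [mul_apply, mul_apply, ← Finset.sum_range_reflect]
  refine Finset.sum_congr rfl fun j hj => ?_
  have hj' : j ≤ n := Nat.lt_succ_iff.mp (Finset.mem_range.mp hj)
  have h1 : n + 1 - 1 - j = n - j := by omega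
  rw [h1, Nat.choose_symm hj', Nat.sub_sub_self hj']
  ring

private theorem hone_mul (a : HS R) : 1 * a = a := by
  funext n
  rw [mul_apply]
  rw [Finset.sum_eq_single 0]
  · simp [one_apply]
  · intro j hj hj0
    simp [one_apply, hj0]
  · intro h
    exact absurd (Finset.mem_range.mpr (Nat.succ_pos n)) h

private theorem hmul_assoc (a b c : HS R) : a * b * c = a * (b * c) := by
  funext n
  rw [mul_apply, mul_apply]
  simp_rw [mul_apply, Finset.mul_sum]
  simp_rw [Finset.sum_mul]
  rw [Finset.sum_sigma', Finset.sum_sigma']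
  refine Finset.sum_nbij' (fun x => ⟨x.2, x.1 - x.2⟩) (fun x => ⟨x.1 + x.2, x.1⟩)
    ?_ ?_ ?_ ?_ ?_
  · rintro ⟨p, i⟩ h
    simp only [Finset.mem_sigma, Finset.mem_range] at h ⊢
    omega
  · rintro ⟨i, j⟩ h
    simp only [Finset.mem_sigma, Finset.mem_range] at h ⊢
    omega
  · rintro ⟨p, i⟩ h
    simp only [Finset.mem_sigma, Finset.mem_range] at h
    dsimp only
    exact congrArg (fun m => (⟨m, i⟩ : Σ _ : ℕ, ℕ)) (by omega)
  · rintro ⟨i, j⟩ h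
    simp only [Finset.mem_sigma, Finset.mem_range] at h
    dsimp only
    exact congrArg (fun m => (⟨i, m⟩ : Σ _ : ℕ, ℕ)) (by omega)
  · rintro ⟨p, i⟩ h
    simp only [Finset.mem_sigma, Finset.mem_range] at h
    have hip : i ≤ p := by omega
    have hpn : p ≤ n := by omega
    have h2 : n - i - (p - i) = n - p := by omega
    have h3 : (n.choose p : R) * (p.choose i : R)
        = (n.choose i : R) * ((n - i).choose (p - i) : R) := by
      rw [← Nat.cast_mul, ← Nat.cast_mul, Nat.choose_mul (n := n) hip]
    simp only [h2]
    calc ((n.choose p : R) * ((p.choose i : R) * a i * b (p - i)) * c (n - p))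
        = ((n.choose p : R) * (p.choose i : R)) * (a i * b (p - i) * c (n - p)) := by ring
      _ = ((n.choose i : R) * ((n - i).choose (p - i) : R)) * (a i * b (p - i) * c (n - p)) := by
          rw [h3]
      _ = (n.choose i : R) * a i * (((n - i).choose (p - i) : R) * b (p - i) * c (n - p)) := by
          ring

instance : CommRing (HS R) :=
  { (inferInstance : AddCommGroup (HS R)) with
    mul := (· * ·)
    one := (1 : HS R)
    mul_assoc := hmul_assoc
    one_mul := hone_mul
    mul_one := fun a => by rw [hmul_comm]; exact hone_mul a
    left_distrib := fun a b c => by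
      funext n
      simp only [mul_apply, add_apply]
      rw [← Finset.sum_add_distrib]
      exact Finset.sum_congr rfl fun j _ => by ring
    right_distrib := fun a b c => by
      funext n
      simp only [mul_apply, add_apply]
      rw [← Finset.sum_add_distrib]
      exact Finset.sum_congr rfl fun j _ => by ring
    zero_mul := fun a => by funext n; simp [mul_apply]
    mul_zero := fun a => by funext n; simp [mul_apply]
    mul_comm := hmul_comm }

/-- The derivation `∂` on Hurwitz series: the left-shift. -/
def D (a : HS R) : HS R := fun n => a (n + 1)

@[simp] theorem D_apply (a : HS R) (n : ℕ) : D a n = a (n + 1) := rfl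

/-- The exponential `exp β = (1, β, β², …)`. -/
def hexp (b : R) : HS R := fun n => b ^ n

@[simp] theorem hexp_apply (b : R) (n : ℕ) : hexp b n = b ^ n := rfl

/-- The divided power `x^{[i]}`: the sequence with `1` in position `i` and `0` elsewhere. -/
def dpow (i : ℕ) : HS R := fun n => if n = i then 1 else 0

/-- The constant Hurwitz series `(r, 0, 0, …)`. -/
def const (r : R) : HS R := fun n => if n = 0 then r else 0

/-- Entrywise map of a Hurwitz series along a map of coefficients. -/
def map {K L : Type*} (f : K → L) (a : HS K) : HS L := fun n => f (a n)

/-- `σ` is a differential automorphism of the subspace `V` of `HS k`: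
a `k`-linear automorphism of `V` commuting with the derivation `D`. -/
def IsDiffAut {k : Type*} [Field k] (V : Submodule k (HS k)) (σ : V ≃ₗ[k] V) : Prop :=
  ∀ v w : V, (w : HS k) = D (v : HS k) → (σ w : HS k) = D (σ v : HS k)

end HS

/-- The nilpotent upper Jordan block of size `m` (ones on the superdiagonal). -/
def jordanBlock (k : Type*) [Field k] (m : ℕ) : Matrix (Fin m) (Fin m) k :=
  Matrix.of fun i j => if (i : ℕ) + 1 = (j : ℕ) then 1 else 0

/-- The centralizer of a matrix `A` inside `GL(m, k)`, as a set of matrices. -/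
def matCent {k : Type*} [Field k] {m : ℕ} (A : Matrix (Fin m) (Fin m) k) :
    Set (Matrix (Fin m) (Fin m) k) :=
  {T | IsUnit T ∧ A * T = T * A}

/-- The group `U(m, k)` of upper triangular matrices in `GL(m, k)` with all diagonal
entries equal to `1`, as a set of matrices. -/
def uniUpper (k : Type*) [Field k] (m : ℕ) : Set (Matrix (Fin m) (Fin m) k) :=
  {T | IsUnit T ∧ (∀ i, T i i = 1) ∧ ∀ i j : Fin m, (j : ℕ) < (i : ℕ) → T i j = 0}


section Aux

variable {k : Type*} [Field k]

theorem iterD_apply (j : ℕ) : ∀ (y : HS k) (m : ℕ), (HS.D^[j] y) m = y (m + j) := by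
  induction j with
  | zero => intro y m; rfl
  | succ j ih => intro y m; rw [Function.iterate_succ_apply, ih]; rfl

theorem hs_sum_apply {ι : Type*} (s : Finset ι) (f : ι → HS k) (m : ℕ) :
    (∑ i ∈ s, f i) m = ∑ i ∈ s, f i m := by
  classical
  induction s using Finset.cons_induction with
  | empty => rfl
  | cons a s ha ih => rw [Finset.sum_cons, Finset.sum_cons, HS.add_apply, ih]

variable (n : ℕ) (h : Fin n → HS k)

/-- The differential operator. -/
def Lfun (y : HS k) : HS k := HS.D^[n] y + ∑ i : Fin n, h i * HS.D^[(i : ℕ)] y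

theorem Lfun_apply (y : HS k) (m : ℕ) :
    Lfun n h y m = y (m + n) + ∑ i : Fin n, ∑ j ∈ Finset.range (m + 1),
      (m.choose j : k) * h i j * y (m - j + i) := by
  simp only [Lfun, HS.add_apply, hs_sum_apply, HS.mul_apply, iterD_apply]

theorem mem_sol_iff (y : HS k) :
    Lfun n h y = 0 ↔ ∀ m, y (m + n) = -∑ i : Fin n, ∑ j ∈ Finset.range (m + 1),
      (m.choose j : k) * h i j * y (m - j + i) := by
  constructor
  · intro H m
    have := congrFun H m
    rw [Lfun_apply] at this
    exact eq_neg_of_add_eq_zero_left this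
  · intro H
    funext m
    rw [Lfun_apply, H m]
    show _ = (0 : k)
    rw [neg_add_cancel]

theorem Lfun_add (a b : HS k) : Lfun n h (a + b) = Lfun n h a + Lfun n h b := by
  funext m
  simp only [Lfun_apply, HS.add_apply, mul_add, Finset.sum_add_distrib]
  ring

theorem Lfun_smul (c : k) (a : HS k) : Lfun n h (c • a) = c • Lfun n h a := by
  funext m
  simp only [Lfun_apply, HS.smul_apply, smul_eq_mul, mul_add, Finset.mul_sum]
  congr 1
  refine Finset.sum_congr rfl fun i _ => Finset.sum_congr rfl fun j _ => by ring

theorem Lfun_zero : Lfun n h 0 = 0 := by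
  funext m
  simp [Lfun_apply]

/-- The solution space, as a submodule. -/
def solSpace : Submodule k (HS k) where
  carrier := {y | Lfun n h y = 0}
  add_mem' := fun {a b} ha hb => by
    show Lfun n h (a + b) = 0
    rw [Lfun_add, ha, hb, add_zero]
  zero_mem' := Lfun_zero n h
  smul_mem' := fun c y hy => by
    show Lfun n h (c • y) = 0
    rw [Lfun_smul, hy, smul_zero]

theorem sol_unique (y : HS k) (hy : Lfun n h y = 0)
    (h0 : ∀ t, t < n → y t = 0) : y = 0 := by
  funext t
  show y t = 0
  induction t using Nat.strong_induction_on with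
  | _ t ih =>
    by_cases ht : t < n
    · exact h0 t ht
    · have key := (mem_sol_iff n h y).mp hy (t - n)
      have ht' : t - n + n = t := by omega
      rw [ht'] at key
      rw [key, neg_eq_zero]
      refine Finset.sum_eq_zero fun i _ => Finset.sum_eq_zero fun j hj => ?_
      rw [ih (t - n - j + i) (by have := i.isLt; omega), mul_zero]

/-- The solution with prescribed initial values. -/
def solVec (v : Fin n → k) : ℕ → k
  | t =>
    if ht : t < n then v ⟨t, ht⟩
    else -∑ i : Fin n, ∑ j ∈ Finset.range (t - n + 1),
      ((t - n).choose j : k) * h i j * solVec v (t - n - j + (i : ℕ))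
  decreasing_by
    have := i.isLt; omega

theorem solVec_lt (v : Fin n → k) {t : ℕ} (ht : t < n) : solVec n h v t = v ⟨t, ht⟩ := by
  rw [solVec]
  simp [ht]

theorem solVec_mem (v : Fin n → k) : Lfun n h (solVec n h v) = 0 := by
  refine (mem_sol_iff n h (solVec n h v)).mpr ?_
  intro m
  rw [solVec]
  have hm : ¬ m + n < n := by omega
  have hm' : m + n - n = m := by omega
  simp only [hm, dif_neg, not_false_iff, hm']

theorem finrank_solSpace : Module.finrank k (solSpace n h) = n := by
  let φ : solSpace n h →ₗ[k] (Fin n → k) :=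
    { toFun := fun y => fun i => (y : HS k) (i : ℕ)
      map_add' := fun a b => rfl
      map_smul' := fun c a => rfl }
  have hinj : Function.Injective φ := by
    intro y z hyz
    have hmem : Lfun n h ((y : HS k) - (z : HS k)) = 0 := by
      have := (y - z).2
      exact this
    have hz : ((y : HS k) - (z : HS k)) = 0 := by
      refine sol_unique n h _ hmem fun t ht => ?_
      have hyt : (y : HS k) t = (z : HS k) t := congrFun hyz ⟨t, ht⟩
      show (y : HS k) t - (z : HS k) t = 0
      rw [hyt, sub_self]
    exact Subtype.ext (sub_eq_zero.mp hz)
  have hsurj : Function.Surjective φ := by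
    intro v
    refine ⟨⟨solVec n h v, solVec_mem n h v⟩, ?_⟩
    funext i
    show solVec n h v (i : ℕ) = v i
    rw [solVec_lt n h v i.isLt]
  have e := LinearEquiv.ofBijective φ ⟨hinj, hsurj⟩
  rw [e.finrank_eq, Module.finrank_fintype_fun_eq_card, Fintype.card_fin]

end Aux

/-- For a field `k`, `n ≥ 1` and `h₀, …, h_{n-1} ∈ Hk`, the solution set
`V = {h ∈ Hk | ∂ⁿ h + ∑_{i<n} hᵢ ∂ⁱ h = 0}` is an `n`-dimensional `k`-subspace of `Hk`. -/
theorem stmt_1 {k : Type*} [Field k] (n : ℕ) (hn : 1 ≤ n) (h : Fin n → HS k) :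
    ∃ W : Submodule k (HS k),
      (W : Set (HS k)) =
        {y : HS k | HS.D^[n] y + ∑ i : Fin n, h i * HS.D^[(i : ℕ)] y = 0} ∧
      Module.finrank k W = n := by
  exact ⟨solSpace n h, rfl, finrank_solSpace n h⟩
end

section
/- Let A be a commutative ring with identity, let n ≥ 1, let h_0, …, h_{n−1} ∈ HA and c_0, …, c_{n−1} ∈ A, and let L(h) = ∂ⁿ(h) + Σ_{i=0}^{n−1} h_i·∂ⁱ(h). Then the element y ∈ HA determined recursively by π_i(y) = c_i for i = 0,1,…,n−1 and π_{n+m}(y) = −Σ_{i=0}^{n−1} Σ_{j=0}^{m} C(m,j)·π_j(h_i)·π_{m−j+i}(y) for all m ∈ ℕ, is the unique element of HA satisfying L(y) = 0 and π_i(y) = c_i for i = 0,1,…,n−1. -/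
open scoped BigOperators

set_option linter.unusedSectionVars false

theorem HS.D_iter_apply {R : Type*} [CommRing R] (k : ℕ) (a : HS R) (m : ℕ) :
    HS.D^[k] a m = a (m + k) := by
  induction k generalizing a m with
  | zero => rfl
  | succ k ih =>
    rw [Function.iterate_succ_apply, ih, HS.D_apply]
    ring_nf

theorem HS.sum_apply' {R : Type*} [CommRing R] {ι : Type*} (s : Finset ι) (f : ι → HS R)
    (m : ℕ) : (∑ i ∈ s, f i) m = ∑ i ∈ s, f i m := by
  induction s using Finset.cons_induction with
  | empty => rfl
  | cons i s hi ih => rw [Finset.sum_cons, Finset.sum_cons, HS.add_apply, ih]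

/-- Over a commutative ring `A`, the element `y ∈ HA` determined recursively by
`πᵢ(y) = cᵢ` for `i < n` and
`π_{n+m}(y) = -∑_{i<n} ∑_{j≤m} C(m,j) πⱼ(hᵢ) π_{m-j+i}(y)` is the unique element with
`L(y) = 0` and `πᵢ(y) = cᵢ` for `i < n`, where `L(h) = ∂ⁿ h + ∑_{i<n} hᵢ ∂ⁱ h`. -/
theorem stmt_2 {A : Type*} [CommRing A] (n : ℕ) (hn : 1 ≤ n) (h : Fin n → HS A)
    (c : Fin n → A) (y : HS A)
    (hinit : ∀ i : Fin n, y (i : ℕ) = c i)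
    (hrec : ∀ m : ℕ, y (n + m) =
      -∑ i : Fin n, ∑ j ∈ Finset.range (m + 1),
        (m.choose j : A) * h i j * y (m - j + (i : ℕ))) :
    (HS.D^[n] y + ∑ i : Fin n, h i * HS.D^[(i : ℕ)] y = 0) ∧
    (∀ i : Fin n, y (i : ℕ) = c i) ∧
    ∀ z : HS A, HS.D^[n] z + ∑ i : Fin n, h i * HS.D^[(i : ℕ)] z = 0 →
      (∀ i : Fin n, z (i : ℕ) = c i) → z = y := by
  have key : ∀ w : HS A,
      (HS.D^[n] w + ∑ i : Fin n, h i * HS.D^[(i : ℕ)] w = 0) ↔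
      (∀ m : ℕ, w (n + m) =
        -∑ i : Fin n, ∑ j ∈ Finset.range (m + 1),
          (m.choose j : A) * h i j * w (m - j + (i : ℕ))) := by
    intro w
    constructor
    · intro he m
      have := congrFun he m
      simp only [HS.add_apply, HS.sum_apply', HS.mul_apply, HS.D_iter_apply,
        HS.zero_apply] at this
      have hc : n + m = m + n := by omega
      rw [hc]
      have : w (m + n) + ∑ i : Fin n, ∑ j ∈ Finset.range (m + 1),
          (m.choose j : A) * h i j * w (m - j + (i : ℕ)) = 0 := this
      linear_combination this
    · intro hr
      funext m
      simp only [HS.add_apply, HS.sum_apply', HS.mul_apply, HS.D_iter_apply,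
        HS.zero_apply]
      have := hr m
      have hc : n + m = m + n := by omega
      rw [hc] at this
      rw [this]
      ring
  refine ⟨(key y).mpr hrec, hinit, fun z hz hzc => ?_⟩
  have hzrec := (key z).mp hz
  funext p
  induction p using Nat.strong_induction_on with
  | _ p ih =>
    by_cases hp : p < n
    · rw [hzc ⟨p, hp⟩, hinit ⟨p, hp⟩]
    · push_neg at hp
      obtain ⟨m, rfl⟩ : ∃ m, p = n + m := ⟨p - n, by omega⟩
      rw [hzrec m, hrec m]
      congr 1
      refine Finset.sum_congr rfl fun i _ => Finset.sum_congr rfl fun j hj => ?_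
      have hj' : j ≤ m := Nat.lt_succ_iff.mp (Finset.mem_range.mp hj)
      have hi : (i : ℕ) < n := i.isLt
      rw [ih (m - j + (i : ℕ)) (by omega)]
end

section
/- Let k be a field, α ∈ k, t ∈ ℕ, and z_j = x^{[j]}·exp(α) ∈ Hk for j = 0,1,…,t. Then the Wronskian determinant of z_0,…,z_t, i.e., the determinant of the (t+1)×(t+1) matrix over Hk whose (i,j)-entry is ∂ⁱ(z_j) (0 ≤ i,j ≤ t), equals exp((t+1)·α); in particular this determinant is invertible in Hk, and z_0, z_1, …, z_t are linearly independent over k. -/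
open scoped BigOperators

set_option linter.unusedSectionVars false

section Aux

namespace HS

variable {k : Type*} [Field k]

theorem sum_apply'_s7 {ι : Type*} (s : Finset ι) (f : ι → HS k) (n : ℕ) :
    (∑ x ∈ s, f x) n = ∑ x ∈ s, f x n := by
  classical
  induction s using Finset.cons_induction with
  | empty => rfl
  | cons a s ha ih => rw [Finset.sum_cons, Finset.sum_cons, add_apply, ih]

theorem coeff_dpow_mul_hexp (α : k) (j n : ℕ) :
    ((dpow j * hexp α : HS k)) n = (n.choose j : k) * α ^ (n - j) := by
  rw [mul_apply, Finset.sum_eq_single j]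
  · simp [dpow]
  · intro b _ hb; simp [dpow, hb]
  · intro hj
    have h : n < j := by simpa using hj
    simp [Nat.choose_eq_zero_of_lt h]

theorem hexp_mul_hexp (a b : k) : hexp a * hexp b = hexp (a + b) := by
  funext n
  rw [hexp_apply, add_pow, mul_apply]
  refine Finset.sum_congr rfl fun j _ => ?_
  simp [hexp]; ring

theorem hexp_zero : (hexp (0 : k)) = 1 := by
  funext n; simp [hexp, one_apply, zero_pow_eq]

theorem hexp_pow (a : k) (m : ℕ) : (hexp a) ^ m = hexp ((m : k) * a) := by
  induction m with
  | zero => simp [hexp_zero]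
  | succ m ih =>
    rw [pow_succ, ih, hexp_mul_hexp]
    congr 1
    push_cast; ring

theorem isUnit_hexp (a : k) : IsUnit (hexp a) :=
  IsUnit.of_mul_eq_one (hexp (-a)) (by rw [hexp_mul_hexp, add_neg_cancel, hexp_zero])

theorem const_mul_apply (c : k) (x : HS k) (n : ℕ) : (const c * x) n = c * x n := by
  rw [mul_apply, Finset.sum_eq_single 0]
  · simp [const]
  · intro b _ hb; simp [const, hb]
  · intro h; exact absurd (Finset.mem_range.mpr n.succ_pos) h

theorem D_iter_apply_s7 (a : HS k) (i n : ℕ) : (D^[i] a) n = a (n + i) := by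
  induction i generalizing a n with
  | zero => rfl
  | succ i ih =>
    rw [Function.iterate_succ_apply, ih, D_apply]
    exact congrArg a (by omega)

theorem const_one : (const (1 : k)) = 1 := rfl

theorem key_sum (α : k) (i j n t : ℕ) (hj : j ≤ t) :
    ∑ m ∈ Finset.range (t + 1), ((i.choose m : k) * α ^ (i - m) *
      (if m ≤ j then ((n.choose (j - m) : k) * α ^ (n - (j - m))) else 0))
    = ((n + i).choose j : k) * α ^ (n + i - j) := by
  rw [← Finset.sum_subset (Finset.range_subset_range.mpr (by omega : j + 1 ≤ t + 1))
    (fun m hm hm' => by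
      have : ¬ m ≤ j := by
        simp only [Finset.mem_range] at hm hm'; omega
      simp [this])]
  have step : ∀ m ∈ Finset.range (j + 1),
      (i.choose m : k) * α ^ (i - m) *
        (if m ≤ j then ((n.choose (j - m) : k) * α ^ (n - (j - m))) else 0)
      = (i.choose m : k) * (n.choose (j - m) : k) * α ^ (n + i - j) := by
    intro m hm
    have hmj : m ≤ j := Nat.lt_succ_iff.mp (Finset.mem_range.mp hm)
    rw [if_pos hmj]
    by_cases h1 : m ≤ i
    · by_cases h2 : j - m ≤ n
      · have : α ^ (i - m) * α ^ (n - (j - m)) = α ^ (n + i - j) := by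
          rw [← pow_add]; congr 1; omega
        calc (i.choose m : k) * α ^ (i - m) * ((n.choose (j - m) : k) * α ^ (n - (j - m)))
            = (i.choose m : k) * (n.choose (j - m) : k) * (α ^ (i - m) * α ^ (n - (j - m))) := by
              ring
          _ = _ := by rw [this]
      · rw [Nat.choose_eq_zero_of_lt (show n < j - m by omega)]; simp
    · rw [Nat.choose_eq_zero_of_lt (show i < m by omega)]; simp
  rw [Finset.sum_congr rfl step, ← Finset.sum_mul]
  congr 1
  have := Nat.add_choose_eq i n j
  rw [Finset.Nat.sum_antidiagonal_eq_sum_range_succ_mk] at this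
  rw [Nat.add_comm n i, this]
  push_cast
  rfl

end HS

end Aux
section Aux

namespace HS

variable {k : Type*} [Field k]

theorem const_zero : (const (0 : k)) = 0 := by
  funext n; simp [const]

theorem dpow_zero : (dpow 0 : HS k) = 1 := rfl

/-- Lower-triangular factor of the Wronskian. -/
def Lmat (α : k) (t : ℕ) : Matrix (Fin (t + 1)) (Fin (t + 1)) (HS k) :=
  Matrix.of fun i m => const (((i : ℕ).choose (m : ℕ) : k) * α ^ ((i : ℕ) - (m : ℕ)))

@[simp] theorem Lmat_apply (α : k) (t : ℕ) (i m : Fin (t + 1)) :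
    Lmat α t i m = const (((i : ℕ).choose (m : ℕ) : k) * α ^ ((i : ℕ) - (m : ℕ))) := rfl

/-- Upper-triangular factor of the Wronskian. -/
def Umat (α : k) (t : ℕ) : Matrix (Fin (t + 1)) (Fin (t + 1)) (HS k) :=
  Matrix.of fun m j =>
    if (m : ℕ) ≤ (j : ℕ) then dpow ((j : ℕ) - (m : ℕ)) * hexp α else 0

@[simp] theorem Umat_apply (α : k) (t : ℕ) (m j : Fin (t + 1)) :
    Umat α t m j = if (m : ℕ) ≤ (j : ℕ) then dpow ((j : ℕ) - (m : ℕ)) * hexp α else 0 := rfl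

end HS

end Aux

/-- the Wronskian determinant of `z_j = x^{[j]} exp α`, `j = 0, …, t`, equals
`exp((t+1)α)`; in particular it is invertible in `Hk` and `z₀, …, z_t` are `k`-linearly
independent. -/
theorem stmt_7 {k : Type*} [Field k] (α : k) (t : ℕ)
    (z : Fin (t + 1) → HS k) (hz : ∀ j, z j = HS.dpow (j : ℕ) * HS.hexp α) :
    (Matrix.of fun i j : Fin (t + 1) => HS.D^[(i : ℕ)] (z j)).det
      = HS.hexp (((t + 1 : ℕ) : k) * α) ∧
    IsUnit (Matrix.of fun i j : Fin (t + 1) => HS.D^[(i : ℕ)] (z j)).det ∧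
    LinearIndependent k z := by
  classical
  set W : Matrix (Fin (t + 1)) (Fin (t + 1)) (HS k) :=
    Matrix.of fun i j : Fin (t + 1) => HS.D^[(i : ℕ)] (z j) with hWdef
  have hW : W = HS.Lmat α t * HS.Umat α t := by
    ext i j
    funext n
    have lhs : W i j n = ((n + (i : ℕ)).choose (j : ℕ) : k) * α ^ (n + (i : ℕ) - (j : ℕ)) := by
      show (HS.D^[(i : ℕ)] (z j)) n = _
      rw [HS.D_iter_apply_s7, hz, HS.coeff_dpow_mul_hexp]
    rw [lhs]
    have rhs : (HS.Lmat α t * HS.Umat α t) i j n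
        = ∑ m ∈ Finset.range (t + 1), (((i : ℕ).choose m : k) * α ^ ((i : ℕ) - m) *
            (if m ≤ (j : ℕ) then ((n.choose ((j : ℕ) - m) : k) * α ^ (n - ((j : ℕ) - m)))
              else 0)) := by
      rw [Matrix.mul_apply, HS.sum_apply'_s7]
      rw [← Fin.sum_univ_eq_sum_range (fun m => (((i : ℕ).choose m : k) * α ^ ((i : ℕ) - m) *
            (if m ≤ (j : ℕ) then ((n.choose ((j : ℕ) - m) : k) * α ^ (n - ((j : ℕ) - m)))
              else 0))) (t + 1)]
      refine Finset.sum_congr rfl fun m _ => ?_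
      show ((HS.const (((i : ℕ).choose (m : ℕ) : k) * α ^ ((i : ℕ) - (m : ℕ)))
          * HS.Umat α t m j : HS k)) n = _
      rw [HS.const_mul_apply]
      by_cases hm : (m : ℕ) ≤ (j : ℕ)
      · rw [HS.Umat_apply, if_pos hm, if_pos hm, HS.coeff_dpow_mul_hexp]
      · rw [HS.Umat_apply, if_neg hm, if_neg hm, HS.zero_apply, mul_zero]
    rw [rhs, HS.key_sum α (i : ℕ) (j : ℕ) n t (Nat.lt_succ_iff.mp j.isLt)]
  have hdetL : (HS.Lmat α t).det = 1 := by
    rw [Matrix.det_of_lowerTriangular _ (by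
      intro i j hij
      have hij' : (i : ℕ) < (j : ℕ) := hij
      rw [HS.Lmat_apply, Nat.choose_eq_zero_of_lt hij']
      simp [HS.const_zero])]
    refine Finset.prod_eq_one fun i _ => ?_
    rw [HS.Lmat_apply, Nat.choose_self, Nat.sub_self, pow_zero, Nat.cast_one, one_mul,
      HS.const_one]
  have hdetU : (HS.Umat α t).det = HS.hexp α ^ (t + 1) := by
    rw [Matrix.det_of_upperTriangular (by
      intro i j hij
      have hij' : (j : ℕ) < (i : ℕ) := hij
      rw [HS.Umat_apply, if_neg (by omega)])]
    have hdiag : ∀ i : Fin (t + 1), HS.Umat α t i i = HS.hexp α := by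
      intro i
      rw [HS.Umat_apply, if_pos le_rfl, Nat.sub_self, HS.dpow_zero, one_mul]
    rw [Finset.prod_congr rfl fun i _ => hdiag i, Finset.prod_const, Finset.card_univ,
      Fintype.card_fin]
  have hdet : W.det = HS.hexp (((t + 1 : ℕ) : k) * α) := by
    rw [hW, Matrix.det_mul, hdetL, hdetU, one_mul, HS.hexp_pow]
  refine ⟨hdet, hdet ▸ HS.isUnit_hexp _, ?_⟩
  rw [Fintype.linearIndependent_iff]
  intro g hg
  have hcoeff : ∀ nn : ℕ, ∑ jj : Fin (t + 1),
      g jj * ((nn.choose (jj : ℕ) : k) * α ^ (nn - (jj : ℕ))) = 0 := by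
    intro nn
    have h := congrFun hg nn
    rw [HS.sum_apply'_s7] at h
    have : ∀ jj : Fin (t + 1), (g jj • z jj) nn
        = g jj * ((nn.choose (jj : ℕ) : k) * α ^ (nn - (jj : ℕ))) := by
      intro jj
      rw [HS.smul_apply, hz, HS.coeff_dpow_mul_hexp, smul_eq_mul]
    rw [Finset.sum_congr rfl fun jj _ => this jj] at h
    exact h
  have key : ∀ N : ℕ, ∀ jj : Fin (t + 1), (jj : ℕ) = N → g jj = 0 := by
    intro N
    induction N using Nat.strong_induction_on with
    | _ N ih =>
      intro jj hjj
      have h0 := hcoeff N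
      rw [Finset.sum_eq_single jj] at h0
      · rw [hjj, Nat.choose_self, Nat.sub_self, pow_zero, Nat.cast_one, one_mul,
          mul_one] at h0
        exact h0
      · intro b _ hb
        rcases lt_trichotomy (b : ℕ) N with hlt | heq | hgt
        · rw [ih _ hlt b rfl, zero_mul]
        · exact absurd (Fin.ext (heq.trans hjj.symm)) hb
        · rw [Nat.choose_eq_zero_of_lt hgt, Nat.cast_zero, zero_mul, mul_zero]
      · intro h; exact absurd (Finset.mem_univ jj) h
  intro i
  exact key (i : ℕ) i rfl
end

section
/- Let k be a field, n ≥ 1, a_0,…,a_{n−1} ∈ k, and let V ⊆ Hk be the full set of solutions of ∂ⁿ(y) + Σ_{i=0}^{n−1} a_i·∂ⁱ(y) = 0. Then the group G(V|k) is commutative (abelian). -/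
open scoped BigOperators

set_option linter.unusedSectionVars false

namespace Stmt17aux

open HS

variable {k : Type*} [Field k]

theorem sum_apply {ι : Type*} (s : Finset ι) (f : ι → HS k) (m : ℕ) :
    (∑ i ∈ s, f i) m = ∑ i ∈ s, f i m := by
  classical
  induction s using Finset.induction_on with
  | empty => rfl
  | insert x s h ih => rw [Finset.sum_insert h, Finset.sum_insert h, HS.add_apply, ih]

theorem D_iterate (y : HS k) (j m : ℕ) : (HS.D^[j] y) m = y (m + j) := by
  induction j generalizing m with
  | zero => rfl
  | succ j ih =>
    rw [Function.iterate_succ_apply']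
    show (HS.D^[j] y) (m + 1) = y (m + (j + 1))
    rw [ih]
    congr 1; omega

theorem const_mul_apply (r : k) (w : HS k) (m : ℕ) : (HS.const r * w) m = r * w m := by
  rw [HS.mul_apply, Finset.sum_eq_single 0]
  · simp [HS.const]
  · intro j _ hj0; simp [HS.const, hj0]
  · intro h; exact absurd (Finset.mem_range.mpr (Nat.succ_pos m)) h

theorem mem_iff (n : ℕ) (a : Fin n → k) (V : Submodule k (HS k))
    (hV : (V : Set (HS k)) =
      {y : HS k | HS.D^[n] y + ∑ i : Fin n, HS.const (a i) * HS.D^[(i : ℕ)] y = 0})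
    (y : HS k) :
    y ∈ V ↔ ∀ m, y (m + n) + ∑ i : Fin n, a i * y (m + (i : ℕ)) = 0 := by
  have h1 : y ∈ V ↔ HS.D^[n] y + ∑ i : Fin n, HS.const (a i) * HS.D^[(i : ℕ)] y = 0 := by
    rw [← SetLike.mem_coe, hV]; exact Iff.rfl
  have heval : ∀ m, (HS.D^[n] y + ∑ i : Fin n, HS.const (a i) * HS.D^[(i : ℕ)] y) m
      = y (m + n) + ∑ i : Fin n, a i * y (m + (i : ℕ)) := by
    intro m
    rw [HS.add_apply, sum_apply, D_iterate]
    congr 1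
    exact Finset.sum_congr rfl fun i _ => by rw [const_mul_apply, D_iterate]
  rw [h1]
  constructor
  · intro h m
    have := congrFun h m
    rw [heval] at this
    exact this
  · intro h
    funext m
    rw [heval]
    exact h m

theorem unique_zero (n : ℕ) (a : Fin n → k) (y : HS k)
    (hy : ∀ m, y (m + n) + ∑ i : Fin n, a i * y (m + (i : ℕ)) = 0)
    (h0 : ∀ j, j < n → y j = 0) : y = 0 := by
  funext m
  induction m using Nat.strong_induction_on with
  | _ m ih =>
    show y m = 0
    by_cases h : m < n
    · exact h0 m h
    · have hrec := hy (m - n)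
      have hz : ∀ i : Fin n, y (m - n + (i : ℕ)) = 0 := fun i => by
        have hi := i.isLt
        have := ih (m - n + (i : ℕ)) (by omega)
        exact this
      have hmn : m - n + n = m := by omega
      rw [hmn] at hrec
      simp only [hz, mul_zero, Finset.sum_const_zero, add_zero] at hrec
      exact hrec

/-- The sequence of state vectors for the companion recurrence, with initial data
`δ_{i, n-1}`. -/
def sv (n : ℕ) (a : Fin n → k) : ℕ → Fin n → k
  | 0 => fun i => if (i : ℕ) = n - 1 then 1 else 0
  | (m + 1) => fun i =>
      if h : (i : ℕ) + 1 < n then sv n a m ⟨(i : ℕ) + 1, h⟩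
      else - ∑ j : Fin n, a j * sv n a m j

/-- The cyclic solution. -/
def cseq (n : ℕ) (hn : 1 ≤ n) (a : Fin n → k) : HS k := fun m => sv n a m ⟨0, hn⟩

theorem sv_eq (n : ℕ) (hn : 1 ≤ n) (a : Fin n → k) :
    ∀ (iv : ℕ) (h : iv < n) (m : ℕ), sv n a m ⟨iv, h⟩ = cseq n hn a (m + iv) := by
  intro iv
  induction iv with
  | zero => intro h m; simp [cseq]
  | succ iv ih =>
    intro h m
    have hlt : iv < n := by omega
    have h1 : sv n a (m + 1) ⟨iv, hlt⟩ = sv n a m ⟨iv + 1, h⟩ := by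
      show (if h' : iv + 1 < n then sv n a m ⟨iv + 1, h'⟩
        else - ∑ j : Fin n, a j * sv n a m j) = sv n a m ⟨iv + 1, h⟩
      rw [dif_pos h]
    rw [← h1, ih hlt (m + 1)]
    congr 1; omega

theorem cseq_init (n : ℕ) (hn : 1 ≤ n) (a : Fin n → k) (j : ℕ) (hj : j < n) :
    cseq n hn a j = if j = n - 1 then 1 else 0 := by
  have := sv_eq n hn a j hj 0
  rw [Nat.zero_add] at this
  rw [← this]
  rfl

theorem cseq_rec (n : ℕ) (hn : 1 ≤ n) (a : Fin n → k) (m : ℕ) :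
    cseq n hn a (m + n) + ∑ i : Fin n, a i * cseq n hn a (m + (i : ℕ)) = 0 := by
  have h3 : ∀ j : Fin n, sv n a m j = cseq n hn a (m + (j : ℕ)) := fun j => by
    have := sv_eq n hn a (j : ℕ) j.isLt m
    simpa using this
  have h1 : cseq n hn a (m + n) = sv n a (m + 1) ⟨n - 1, by omega⟩ := by
    rw [sv_eq n hn a (n - 1) (by omega) (m + 1)]
    congr 1; omega
  have h2 : sv n a (m + 1) ⟨n - 1, by omega⟩ = - ∑ j : Fin n, a j * sv n a m j := by
    show (if h' : (n - 1) + 1 < n then sv n a m ⟨(n - 1) + 1, h'⟩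
      else - ∑ j : Fin n, a j * sv n a m j) = _
    rw [dif_neg (by omega)]
  rw [h1, h2]
  simp only [h3]
  ring

end Stmt17aux
namespace Stmt17aux

variable {k : Type*} [Field k]

/-- The derivation `D` restricted to the solution space `V`. -/
def DV (n : ℕ) (a : Fin n → k) (V : Submodule k (HS k))
    (hm : ∀ y : HS k, y ∈ V ↔ ∀ m, y (m + n) + ∑ i : Fin n, a i * y (m + (i : ℕ)) = 0) :
    V →ₗ[k] V where
  toFun v := ⟨HS.D (v : HS k), by
    rw [hm]
    intro m
    have h := (hm (v : HS k)).1 v.2 (m + 1)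
    calc HS.D (v : HS k) (m + n) + ∑ i : Fin n, a i * HS.D (v : HS k) (m + (i : ℕ))
        = (v : HS k) (m + 1 + n) + ∑ i : Fin n, a i * (v : HS k) (m + 1 + (i : ℕ)) := by
          congr 1
          · exact congrArg (v : HS k) (by omega : m + n + 1 = m + 1 + n)
          · exact Finset.sum_congr rfl fun i _ =>
              congrArg (fun t => a i * (v : HS k) t)
                (by omega : m + (i : ℕ) + 1 = m + 1 + (i : ℕ))
      _ = 0 := h⟩
  map_add' x y := Subtype.ext rfl
  map_smul' c x := Subtype.ext rfl

theorem DV_pow_val (n : ℕ) (a : Fin n → k) (V : Submodule k (HS k)) (hm) (j : ℕ) (v : V) :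
    (((DV n a V hm) ^ j) v : HS k) = HS.D^[j] (v : HS k) := by
  induction j generalizing v with
  | zero => rfl
  | succ j ih =>
    rw [pow_succ, Module.End.mul_apply, ih, Function.iterate_succ_apply]
    rfl

/-- The element of `V` given by the cyclic solution. -/
def cbar (n : ℕ) (hn : 1 ≤ n) (a : Fin n → k) (V : Submodule k (HS k))
    (hm : ∀ y : HS k, y ∈ V ↔ ∀ m, y (m + n) + ∑ i : Fin n, a i * y (m + (i : ℕ)) = 0) : V :=
  ⟨cseq n hn a, (hm _).2 (cseq_rec n hn a)⟩

/-- The linear map sending coefficients to the corresponding combination of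
derivatives of the cyclic solution. -/
def psi (n : ℕ) (hn : 1 ≤ n) (a : Fin n → k) (V : Submodule k (HS k))
    (hm : ∀ y : HS k, y ∈ V ↔ ∀ m, y (m + n) + ∑ i : Fin n, a i * y (m + (i : ℕ)) = 0) :
    (Fin n → k) →ₗ[k] V where
  toFun q := ∑ i : Fin n, q i • ((DV n a V hm) ^ (i : ℕ)) (cbar n hn a V hm)
  map_add' x y := by
    simp only [Pi.add_apply, add_smul]
    rw [Finset.sum_add_distrib]
  map_smul' c x := by
    simp only [Pi.smul_apply, smul_eq_mul, RingHom.id_apply, Finset.smul_sum, smul_smul]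

theorem psi_val (n : ℕ) (hn : 1 ≤ n) (a : Fin n → k) (V : Submodule k (HS k)) (hm)
    (q : Fin n → k) (m : ℕ) :
    ((psi n hn a V hm q : V) : HS k) m = ∑ i : Fin n, q i * cseq n hn a (m + (i : ℕ)) := by
  have h1 : ((psi n hn a V hm q : V) : HS k)
      = ∑ i : Fin n, q i • ((((DV n a V hm) ^ (i : ℕ)) (cbar n hn a V hm) : V) : HS k) := by
    show ((∑ i : Fin n, q i • ((DV n a V hm) ^ (i : ℕ)) (cbar n hn a V hm) : V) : HS k) = _
    rw [Submodule.coe_sum]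
    exact Finset.sum_congr rfl fun i _ => rfl
  rw [h1, sum_apply]
  exact Finset.sum_congr rfl fun i _ => by
    rw [HS.smul_apply, DV_pow_val, D_iterate, smul_eq_mul]
    rfl

theorem psi_inj (n : ℕ) (hn : 1 ≤ n) (a : Fin n → k) (V : Submodule k (HS k)) (hm) :
    Function.Injective (psi n hn a V hm) := by
  rw [injective_iff_map_eq_zero]
  intro q hq0
  have hval : ∀ m, ∑ i : Fin n, q i * cseq n hn a (m + (i : ℕ)) = 0 := fun m => by
    rw [← psi_val n hn a V hm q m, hq0]
    rfl
  have key : ∀ i : Fin n, (∀ i' : Fin n, (i : ℕ) < (i' : ℕ) → q i' = 0) → q i = 0 := by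
    intro i hi
    have hin := i.isLt
    have h := hval (n - 1 - (i : ℕ))
    rw [Finset.sum_eq_single i] at h
    · have e : n - 1 - (i : ℕ) + (i : ℕ) = n - 1 := by omega
      rw [e, cseq_init n hn a (n - 1) (by omega), if_pos rfl, mul_one] at h
      exact h
    · intro i' _ hne
      rcases lt_or_gt_of_ne (fun hc : (i' : ℕ) = (i : ℕ) => hne (Fin.ext hc)) with hlt | hgt
      · rw [cseq_init n hn a (n - 1 - (i : ℕ) + (i' : ℕ)) (by omega),
          if_neg (fun hc : n - 1 - (i : ℕ) + (i' : ℕ) = n - 1 => by omega), mul_zero]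
      · rw [hi i' hgt, zero_mul]
    · intro hni; exact absurd (Finset.mem_univ i) hni
  have claim : ∀ d : ℕ, ∀ i : Fin n, n ≤ (i : ℕ) + d + 1 → q i = 0 := by
    intro d
    induction d with
    | zero => exact fun i hi => key i (fun i' h' => absurd i'.isLt (by omega))
    | succ d ih => exact fun i hi => key i (fun i' h' => ih i' (by omega))
  funext i
  exact claim n i (by have := i.isLt; omega)

end Stmt17aux

set_option synthInstance.maxHeartbeats 1000000

/-- the group of differential automorphisms of the full solution space of a
monic linear homogeneous differential equation with constant coefficients is commutative. -/
theorem stmt_17 {k : Type*} [Field k] (n : ℕ) (hn : 1 ≤ n) (a : Fin n → k)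
    (V : Submodule k (HS k))
    (hV : (V : Set (HS k)) =
      {y : HS k | HS.D^[n] y + ∑ i : Fin n, HS.const (a i) * HS.D^[(i : ℕ)] y = 0}) :
    ∀ σ τ : V ≃ₗ[k] V, HS.IsDiffAut V σ → HS.IsDiffAut V τ →
      ∀ v : V, σ (τ v) = τ (σ v) := by
  classical
  have hm : ∀ y : HS k, y ∈ V ↔ ∀ m, y (m + n) + ∑ i : Fin n, a i * y (m + (i : ℕ)) = 0 :=
    Stmt17aux.mem_iff n a V hV
  set F : V →ₗ[k] V := Stmt17aux.DV n a V hm with hF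
  set cb : V := Stmt17aux.cbar n hn a V hm with hcb
  set ψ : (Fin n → k) →ₗ[k] V := Stmt17aux.psi n hn a V hm with hψ
  -- every diff automorphism commutes with powers of F
  have hcomm : ∀ (ρ : V ≃ₗ[k] V), HS.IsDiffAut V ρ → ∀ (j : ℕ) (w : V),
      ρ ((F ^ j) w) = (F ^ j) (ρ w) := by
    intro ρ hρ j
    induction j with
    | zero => intro w; simp
    | succ j ih =>
      intro w
      have h1 : ρ (F w) = F (ρ w) := by
        have h2 := hρ w (F w) rfl
        exact Subtype.ext h2
      rw [pow_succ, Module.End.mul_apply, Module.End.mul_apply, ih, h1]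
  -- the "initial values" map is injective
  have hpiinj : Function.Injective (fun (v : V) (i : Fin n) => (v : HS k) (i : ℕ)) := by
    intro x y hxy
    have hsub : ((x - y : V) : HS k) = 0 := by
      refine Stmt17aux.unique_zero n a _ ((hm _).1 (x - y).2) (fun j hj => ?_)
      have h' : (x : HS k) j = (y : HS k) j := congrFun hxy ⟨j, hj⟩
      show (x : HS k) j - (y : HS k) j = 0
      rw [h']
      exact sub_self _
    have : x - y = 0 := Subtype.ext hsub
    exact sub_eq_zero.mp this
  let piV : V →ₗ[k] (Fin n → k) :=
    { toFun := fun v i => (v : HS k) (i : ℕ)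
      map_add' := fun x y => rfl
      map_smul' := fun c x => rfl }
  haveI : FiniteDimensional k V := FiniteDimensional.of_injective piV hpiinj
  have hψinj : Function.Injective ψ := Stmt17aux.psi_inj n hn a V hm
  have hfr : Module.finrank k (Fin n → k) = Module.finrank k V := by
    have h1 : Module.finrank k V ≤ Module.finrank k (Fin n → k) :=
      LinearMap.finrank_le_finrank_of_injective (f := piV) hpiinj
    have h2 : Module.finrank k (Fin n → k) ≤ Module.finrank k V :=
      LinearMap.finrank_le_finrank_of_injective (f := ψ) hψinj
    omega
  have hψsurj : Function.Surjective ψ :=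
    (LinearMap.injective_iff_surjective_of_finrank_eq_finrank hfr).1 hψinj
  have hψdef : ∀ p : Fin n → k, ψ p = ∑ j : Fin n, p j • (F ^ (j : ℕ)) cb := fun _ => rfl
  intro σ τ hσ hτ v
  obtain ⟨q, hq⟩ := hψsurj (σ cb)
  -- σ acts as ∑ q i • F ^ i
  have hσ_eq : ∀ w : V, σ w = ∑ i : Fin n, q i • (F ^ (i : ℕ)) w := by
    intro w
    obtain ⟨p, hp⟩ := hψsurj w
    rw [← hp, hψdef p, map_sum]
    simp only [map_smul, hcomm σ hσ]
    rw [← hq, hψdef q]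
    simp only [map_sum, map_smul, Finset.smul_sum, smul_smul]
    rw [Finset.sum_comm]
    refine Finset.sum_congr rfl fun i _ => Finset.sum_congr rfl fun j _ => ?_
    rw [mul_comm]
    congr 1
    rw [← Module.End.mul_apply, ← Module.End.mul_apply, (Commute.pow_pow_self F (j : ℕ) (i : ℕ)).eq]
  calc σ (τ v) = ∑ i : Fin n, q i • (F ^ (i : ℕ)) (τ v) := hσ_eq (τ v)
    _ = ∑ i : Fin n, q i • τ ((F ^ (i : ℕ)) v) := by
        exact Finset.sum_congr rfl fun i _ => by rw [hcomm τ hτ]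
    _ = τ (∑ i : Fin n, q i • (F ^ (i : ℕ)) v) := by rw [map_sum]; simp only [map_smul]
    _ = τ (σ v) := by rw [← hσ_eq v]
end
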